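/- Let r, m, s be positive integers with m > r. Then in LCTR, SG(((r+1)ᵐ, rˢ)) = 0 if r + m is even, and SG(((r+1)ᵐ, rˢ)) = 1 if r + m is odd, where ((r+1)ᵐ, rˢ) is the partition with m parts equal to r+1 followed by s parts equal to r. -/

import Mathlib

/-- Remove the left column of a Young diagram: subtract 1 from each part and
omit nonpositive values. -/
def leftCol (l : List ℕ) : List ℕ := (l.map (· - 1)).filter (0 < ·)

/-- Remove the top row of a Young diagram. -/
def topRow (l : List ℕ) : List ℕ := l.tail

/-- Minimum excluded value of a set of naturals. -/
noncomputable def mex (s : Set ℕ) : ℕ := sInf {n | n ∉ s}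

def wt (l : List ℕ) : ℕ := l.sum + l.length

lemma wt_leftCol_le (l : List ℕ) : wt (leftCol l) ≤ l.sum := by
  induction l with
  | nil => simp [leftCol, wt]
  | cons a t ih =>
    simp only [leftCol, wt] at ih ⊢
    rw [List.map_cons, List.filter_cons]
    by_cases h : 0 < a - 1
    · simp only [h, decide_true, if_true, List.sum_cons, List.length_cons]
      omega
    · simp only [h, decide_false, Bool.false_eq_true, if_false, List.sum_cons]
      omega

lemma wt_leftCol_lt (l : List ℕ) (h : l ≠ []) : wt (leftCol l) < wt l := by
  have h1 := wt_leftCol_le l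
  have h2 : 0 < l.length := List.length_pos_iff.mpr h
  unfold wt at *
  omega

lemma wt_topRow_lt (l : List ℕ) (h : l ≠ []) : wt (topRow l) < wt l := by
  cases l with
  | nil => exact absurd rfl h
  | cons a t => simp [topRow, wt]; omega

/-- The Sprague–Grundy value of a position in the LCTR game. -/
noncomputable def SG (l : List ℕ) : ℕ :=
  if h : l = [] then 0
  else mex {SG (leftCol l), SG (topRow l)}
termination_by wt l
decreasing_by
  · exact wt_leftCol_lt l h
  · exact wt_topRow_lt l h

/-- A partition: a non-increasing list of positive integers. -/
def IsPartition (l : List ℕ) : Prop := l.Pairwise (· ≥ ·) ∧ ∀ x ∈ l, 0 < x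

/-- The conjugate partition: the `j`-th part (for `1 ≤ j ≤ l₁`) is the number
of parts of `l` that are at least `j`. -/
def conj (l : List ℕ) : List ℕ :=
  (List.range (l.headD 0)).map (fun j => l.countP (fun x => decide (j < x)))

section Aux

lemma SG_nil : SG [] = 0 := by rw [SG]; simp

lemma SG_of_ne_nil (l : List ℕ) (h : l ≠ []) :
    SG l = mex {SG (leftCol l), SG (topRow l)} := by
  rw [SG]; simp [h]

lemma mex_eq_of (S : Set ℕ) (n : ℕ) (hn : n ∉ S) (h : ∀ k, k < n → k ∈ S) :
    mex S = n := by
  have hle : mex S ≤ n := Nat.sInf_le hn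
  by_contra hne
  have hmem : mex S ∈ {k | k ∉ S} := Nat.sInf_mem ⟨n, hn⟩
  exact hmem (h _ (lt_of_le_of_ne hle hne))

lemma mex_pair_not_mem (a b : ℕ) : mex {a, b} ∉ ({a, b} : Set ℕ) := by
  have hw : (a + b + 1) ∈ {k | k ∉ ({a, b} : Set ℕ)} := by
    simp only [Set.mem_setOf_eq, Set.mem_insert_iff, Set.mem_singleton_iff]
    omega
  exact Nat.sInf_mem ⟨_, hw⟩

lemma leftCol_append (a b : List ℕ) : leftCol (a ++ b) = leftCol a ++ leftCol b := by
  simp [leftCol]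

lemma leftCol_replicate (k x : ℕ) (hx : 1 < x) :
    leftCol (List.replicate k x) = List.replicate k (x - 1) := by
  induction k with
  | zero => rfl
  | succ n ih =>
    rw [List.replicate_succ, List.replicate_succ]
    simp only [leftCol] at ih ⊢
    rw [List.map_cons, List.filter_cons]
    have hpos : (0 < x - 1) := by omega
    simp [hpos, ih]

lemma leftCol_replicate_one (k : ℕ) : leftCol (List.replicate k 1) = [] := by
  induction k with
  | zero => rfl
  | succ n ih =>
    rw [List.replicate_succ]
    simp only [leftCol] at ih ⊢
    rw [List.map_cons, List.filter_cons]
    simp [ih]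

lemma topRow_eq (k x : ℕ) (l : List ℕ) :
    topRow (List.replicate (k + 1) x ++ l) = List.replicate k x ++ l := by
  rw [List.replicate_succ]; rfl

lemma SG_ones (k : ℕ) :
    SG (List.replicate (k + 1) 1) = if k % 2 = 0 then 1 else 2 := by
  induction k with
  | zero =>
    rw [SG_of_ne_nil _ (by simp)]
    have h1 : leftCol (List.replicate 1 1) = [] := leftCol_replicate_one 1
    have h2 : topRow (List.replicate 1 1) = [] := rfl
    rw [h1, h2, SG_nil, if_pos rfl]
    apply mex_eq_of
    · simp only [Set.mem_insert_iff, Set.mem_singleton_iff]; omega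
    · intro k hk
      have hk0 : k = 0 := by omega
      subst hk0; simp
  | succ n ih =>
    rw [SG_of_ne_nil _ (by simp)]
    rw [leftCol_replicate_one,
      show topRow (List.replicate (n + 1 + 1) 1) = List.replicate (n + 1) 1 from rfl]
    rw [SG_nil, ih]
    by_cases h : n % 2 = 0
    · rw [if_pos h, if_neg (by omega)]
      apply mex_eq_of
      · simp only [Set.mem_insert_iff, Set.mem_singleton_iff]; omega
      · intro k hk; simp only [Set.mem_insert_iff, Set.mem_singleton_iff]; omega
    · rw [if_neg h, if_pos (by omega)]
      apply mex_eq_of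
      · simp only [Set.mem_insert_iff, Set.mem_singleton_iff]; omega
      · intro k hk; simp only [Set.mem_insert_iff, Set.mem_singleton_iff]; omega

lemma SG_twos (k : ℕ) :
    SG (List.replicate (k + 1) 2) = if k % 2 = 0 then 2 else 0 := by
  induction k with
  | zero =>
    rw [SG_of_ne_nil _ (by simp)]
    have h1 : leftCol (List.replicate 1 2) = List.replicate 1 1 :=
      leftCol_replicate 1 2 (by omega)
    have h2 : topRow (List.replicate 1 2) = [] := rfl
    rw [h1, h2, SG_nil, SG_ones 0, if_pos rfl, if_pos rfl]
    apply mex_eq_of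
    · simp only [Set.mem_insert_iff, Set.mem_singleton_iff]; omega
    · intro k hk; simp only [Set.mem_insert_iff, Set.mem_singleton_iff]; omega
  | succ n ih =>
    rw [SG_of_ne_nil _ (by simp)]
    rw [leftCol_replicate _ 2 (by omega),
      show topRow (List.replicate (n + 1 + 1) 2) = List.replicate (n + 1) 2 from rfl]
    rw [show (2 : ℕ) - 1 = 1 from rfl, SG_ones (n + 1), ih]
    by_cases h : n % 2 = 0
    · rw [if_neg (by omega), if_pos h, if_neg (by omega)]
      apply mex_eq_of
      · simp only [Set.mem_insert_iff, Set.mem_singleton_iff]; omega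
      · intro k hk; exact absurd hk (by omega)
    · rw [if_pos (by omega), if_neg h, if_pos (by omega)]
      apply mex_eq_of
      · simp only [Set.mem_insert_iff, Set.mem_singleton_iff]; omega
      · intro k hk; simp only [Set.mem_insert_iff, Set.mem_singleton_iff]; omega

lemma SG_main : ∀ n r m s : ℕ, r + m + s ≤ n → 1 ≤ r → 1 ≤ s → 1 ≤ m → r ≤ m + 1 →
    SG (List.replicate m (r + 1) ++ List.replicate s r) = (r + m) % 2 := by
  intro n
  induction n with
  | zero => intro r m s h hr; omega
  | succ n ih =>
    intro r m s hn hr hs hm hrm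
    obtain ⟨m, rfl⟩ : ∃ m', m = m' + 1 := ⟨m - 1, by omega⟩
    obtain ⟨s, rfl⟩ : ∃ s', s = s' + 1 := ⟨s - 1, by omega⟩
    rw [SG_of_ne_nil _ (by simp), leftCol_append,
      leftCol_replicate _ (r + 1) (by omega), topRow_eq,
      show r + 1 - 1 = r by omega]
    rcases Nat.lt_or_ge 1 r with hr2 | hr1
    · -- r ≥ 2
      rw [leftCol_replicate _ r hr2]
      have hL : SG (List.replicate (m + 1) r ++ List.replicate (s + 1) (r - 1)) =
          (r - 1 + (m + 1)) % 2 := by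
        have h := ih (r - 1) (m + 1) (s + 1) (by omega) (by omega) (by omega)
          (by omega) (by omega)
        rw [show r - 1 + 1 = r by omega] at h
        exact h
      rw [hL]
      rcases Nat.lt_or_ge m (r - 1) with hmr | hmr
      · -- r = m + 2 boundary case
        have hrm2 : r = m + 2 := by omega
        have hT_ne_one : SG (List.replicate m (r + 1) ++ List.replicate (s + 1) r) ≠ 1 := by
          rcases Nat.eq_zero_or_pos m with hm0 | hm0
          · subst hm0
            rw [show List.replicate 0 (r + 1) ++ List.replicate (s + 1) r
                = List.replicate (s + 1) r by simp]
            rw [show r = 2 by omega, SG_twos s]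
            split <;> omega
          · obtain ⟨m', rfl⟩ : ∃ m'', m = m'' + 1 := ⟨m - 1, by omega⟩
            rw [SG_of_ne_nil _ (by simp), leftCol_append,
              leftCol_replicate _ (r + 1) (by omega), leftCol_replicate _ r hr2,
              show r + 1 - 1 = r by omega]
            have hL2 : SG (List.replicate (m' + 1) r ++ List.replicate (s + 1) (r - 1)) =
                (r - 1 + (m' + 1)) % 2 := by
              have h := ih (r - 1) (m' + 1) (s + 1) (by omega) (by omega) (by omega)
                (by omega) (by omega)
              rw [show r - 1 + 1 = r by omega] at h
              exact h
            rw [hL2, show (r - 1 + (m' + 1)) % 2 = 1 by omega]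
            intro hcon
            have hnm := mex_pair_not_mem 1
              (SG (topRow (List.replicate (m' + 1) (r + 1) ++ List.replicate (s + 1) r)))
            rw [hcon] at hnm
            exact hnm (Set.mem_insert _ _)
        rw [show (r - 1 + (m + 1)) % 2 = 0 by omega, show (r + (m + 1)) % 2 = 1 by omega]
        apply mex_eq_of
        · simp only [Set.mem_insert_iff, Set.mem_singleton_iff]
          push_neg
          exact ⟨by omega, fun h => hT_ne_one h.symm⟩
        · intro k hk
          have hk0 : k = 0 := by omega
          subst hk0; simp
      · -- m ≥ r - 1: T is in the family
        have hT : SG (List.replicate m (r + 1) ++ List.replicate (s + 1) r) = (r + m) % 2 :=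
          ih r m (s + 1) (by omega) (by omega) (by omega) (by omega) (by omega)
        rw [hT]
        by_cases hp : (r + (m + 1)) % 2 = 0
        · rw [hp, show (r - 1 + (m + 1)) % 2 = 1 by omega, show (r + m) % 2 = 1 by omega]
          apply mex_eq_of
          · simp only [Set.mem_insert_iff, Set.mem_singleton_iff]; omega
          · intro k hk; exact absurd hk (by omega)
        · rw [show (r + (m + 1)) % 2 = 1 by omega, show (r - 1 + (m + 1)) % 2 = 0 by omega,
            show (r + m) % 2 = 0 by omega]
          apply mex_eq_of
          · simp only [Set.mem_insert_iff, Set.mem_singleton_iff]; omega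
          · intro k hk; simp only [Set.mem_insert_iff, Set.mem_singleton_iff]; omega
    · -- r = 1
      have hr1' : r = 1 := by omega
      subst hr1'
      rw [leftCol_replicate_one, List.append_nil]
      rcases Nat.eq_zero_or_pos m with hm0 | hm0
      · subst hm0
        rw [show List.replicate 0 (1 + 1) ++ List.replicate (s + 1) 1
            = List.replicate (s + 1) 1 by simp]
        rw [SG_ones 0, if_pos rfl, SG_ones s, show (1 + (0 + 1)) % 2 = 0 by omega]
        apply mex_eq_of
        · simp only [Set.mem_insert_iff, Set.mem_singleton_iff]
          push_neg
          refine ⟨by omega, ?_⟩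
          split <;> omega
        · intro k hk; exact absurd hk (by omega)
      · obtain ⟨m', rfl⟩ : ∃ m'', m = m'' + 1 := ⟨m - 1, by omega⟩
        rw [SG_ones (m' + 1)]
        have hT : SG (List.replicate (m' + 1) (1 + 1) ++ List.replicate (s + 1) 1) =
            (1 + (m' + 1)) % 2 :=
          ih 1 (m' + 1) (s + 1) (by omega) (by omega) (by omega) (by omega) (by omega)
        rw [hT]
        by_cases h : m' % 2 = 0
        · rw [if_neg (by omega), show (1 + (m' + 1)) % 2 = 0 by omega,
            show (1 + (m' + 1 + 1)) % 2 = 1 by omega]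
          apply mex_eq_of
          · simp only [Set.mem_insert_iff, Set.mem_singleton_iff]; omega
          · intro k hk; simp only [Set.mem_insert_iff, Set.mem_singleton_iff]; omega
        · rw [if_pos (by omega), show (1 + (m' + 1)) % 2 = 1 by omega,
            show (1 + (m' + 1 + 1)) % 2 = 0 by omega]
          apply mex_eq_of
          · simp only [Set.mem_insert_iff, Set.mem_singleton_iff]; omega
          · intro k hk; exact absurd hk (by omega)

end Aux


/-- For positive integers `r, m, s` with `m > r`, the partition
`((r+1)ᵐ, rˢ)` has Sprague–Grundy value 0 if `r + m` is even and 1 if `r + m`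
is odd. -/
theorem SG_thick_gamma_one (r m s : ℕ) (hr : 0 < r) (hs : 0 < s) (hm : r < m) :
    (Even (r + m) → SG (List.replicate m (r + 1) ++ List.replicate s r) = 0) ∧
    (Odd (r + m) → SG (List.replicate m (r + 1) ++ List.replicate s r) = 1) := by
  have key := SG_main (r + m + s) r m s (le_refl _) hr hs (by omega) (by omega)
  constructor
  · intro he
    rw [key, Nat.even_iff.mp he]
  · intro ho
    rw [key, Nat.odd_iff.mp ho]
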